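/- Let y be a string of length n > 2 over an alphabet Σ. Then the number of distinct pairs (EndPos_y(x), b) over all x ∈ Substr(y) and b ∈ Σ such that x·b ∈ Substr(y) is at most 3n − 4. (Equivalently, the DAWG of y has at most 3n − 4 edges.) -/

import Mathlib

open List

/-- 1-indexed beginning positions of occurrences of `x` in `y`:
`BegPos y x = { i | 1 ≤ i ≤ |y| - |x| + 1, y[i..i+|x|-1] = x }`. -/
def BegPos {α : Type*} (y x : List α) : Set ℕ :=
  {i | 1 ≤ i ∧ i ≤ y.length - x.length + 1 ∧ x <+: y.drop (i - 1)}

/-- 1-indexed ending positions of occurrences of `x` in `y`: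
`EndPos y x = { i | |x| ≤ i ≤ |y|, y[i-|x|+1..i] = x }`. -/
def EndPos {α : Type*} (y x : List α) : Set ℕ :=
  {i | x.length ≤ i ∧ i ≤ y.length ∧ x <:+ y.take i}

/-- `IsLrepOf y w x` means `w = Lrep_y(x)`: `w` is left-equivalent to `x` in `y`
(`BegPos y w = BegPos y x`) and is the longest such string. -/
def IsLrepOf {α : Type*} (y w x : List α) : Prop :=
  BegPos y w = BegPos y x ∧ ∀ v : List α, BegPos y v = BegPos y x → v.length ≤ w.length

/-- `IsRrepOf y w x` means `w = Rrep_y(x)`: `w` is right-equivalent to `x` in `y`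
(`EndPos y w = EndPos y x`) and is the longest such string. -/
def IsRrepOf {α : Type*} (y w x : List α) : Prop :=
  EndPos y w = EndPos y x ∧ ∀ v : List α, EndPos y v = EndPos y x → v.length ≤ w.length

/-- `x` is a minimal absent word of `y`: `x` is not a substring of `y` and
every proper substring of `x` is a substring of `y`. -/
def IsMAW {α : Type*} (y x : List α) : Prop :=
  ¬ x <:+: y ∧ ∀ w : List α, w <:+: x → w ≠ x → w <:+: y

namespace DawgAux

variable {α : Type*}

lemma suffix_eq_drop {s l : List α} (h : s <:+ l) : s = l.drop (l.length - s.length) := by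
  obtain ⟨t, rfl⟩ := h
  simp [List.drop_left']

lemma suffix_of_suffix_length_le {s1 s2 l : List α} (h1 : s1 <:+ l) (h2 : s2 <:+ l)
    (hl : s1.length ≤ s2.length) : s1 <:+ s2 := by
  rw [← List.reverse_prefix] at h1 h2 ⊢
  exact List.prefix_of_prefix_length_le h1 h2 (by simpa using hl)

lemma take_succ_getElem (y : List α) {j : ℕ} (hj : j < y.length) :
    y.take (j+1) = y.take j ++ [y[j]] := by
  rw [List.take_succ, List.getElem?_eq_getElem hj]
  rfl

lemma infix_of_suffix_take {y x : List α} {i : ℕ} (h : x <:+ y.take i) : x <:+: y :=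
  h.isInfix.trans (y.take_prefix i).isInfix

lemma endpos_nonempty {y x : List α} (h : x <:+: y) : (EndPos y x).Nonempty := by
  obtain ⟨u, v, rfl⟩ := h
  refine ⟨u.length + x.length, ?_, ?_, ?_⟩
  · omega
  · simp only [List.length_append]
    omega
  · rw [show u ++ x ++ v = (u ++ x) ++ v by simp, List.take_left' (by simp)]
    exact ⟨u, rfl⟩

lemma infix_of_mem_endpos {y x : List α} {i : ℕ} (h : i ∈ EndPos y x) : x <:+: y :=
  infix_of_suffix_take h.2.2

lemma endpos_anti {y x1 x2 : List α} (h : x1 <:+ x2) : EndPos y x2 ⊆ EndPos y x1 := by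
  rintro i ⟨h1, h2, h3⟩
  exact ⟨le_trans h.length_le h1, h2, h.trans h3⟩

lemma suffix_comp_of_mem {y x1 x2 : List α} {i : ℕ} (h1 : i ∈ EndPos y x1)
    (h2 : i ∈ EndPos y x2) (h : x1.length ≤ x2.length) : x1 <:+ x2 :=
  suffix_of_suffix_length_le h1.2.2 h2.2.2 h

-- append char lemmas
lemma suffix_append_singleton {l m : List α} {a b : α} (h : l ++ [a] <:+ m ++ [b]) :
    a = b ∧ l <:+ m := by
  obtain ⟨u, hu⟩ := h
  rw [← List.append_assoc] at hu
  have h2 := List.append_inj' hu (by rfl)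
  refine ⟨by simpa using h2.2, u, h2.1⟩

/-- membership of `j` in `EndPos y (x ++ [b])` unpacked. -/
lemma mem_endpos_append_iff {y x : List α} {b : α} {j : ℕ} (hj1 : 1 ≤ j) (hjn : j ≤ y.length) :
    j ∈ EndPos y (x ++ [b]) ↔ (j - 1 ∈ EndPos y x ∧ b = y[j-1]'(by omega)) := by
  have hlt : j - 1 < y.length := by omega
  have htake : y.take j = y.take (j-1) ++ [y[j-1]] := by
    have := take_succ_getElem y hlt
    rwa [show j - 1 + 1 = j by omega] at this
  constructor
  · rintro ⟨h1, h2, h3⟩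
    rw [htake] at h3
    obtain ⟨hb, hx⟩ := suffix_append_singleton h3
    simp only [List.length_append, List.length_singleton] at h1
    exact ⟨⟨by omega, by omega, hx⟩, hb⟩
  · rintro ⟨⟨h1, h2, h3⟩, hb⟩
    refine ⟨by simp; omega, hjn, ?_⟩
    rw [htake, ← hb]
    obtain ⟨t, ht⟩ := h3
    exact ⟨t, by rw [← List.append_assoc, ht]⟩

lemma infix_append_of_endpos_eq {y x w : List α} {b : α}
    (hE : EndPos y x = EndPos y w) (h : (x ++ [b]) <:+: y) : (w ++ [b]) <:+: y := by
  obtain ⟨j, hj⟩ := endpos_nonempty h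
  have hj1 : 1 ≤ j := by
    have := hj.1; simp only [List.length_append, List.length_singleton] at this; omega
  have hjn : j ≤ y.length := hj.2.1
  rw [mem_endpos_append_iff hj1 hjn] at hj
  have : j ∈ EndPos y (w ++ [b]) := by
    rw [mem_endpos_append_iff hj1 hjn]
    exact ⟨hE ▸ hj.1, hj.2⟩
  exact infix_of_mem_endpos this

lemma finite_infix (y : List α) : {x : List α | x <:+: y}.Finite := by
  have : {x : List α | x <:+: y} ⊆
      (fun p : ℕ × ℕ => (y.drop p.1).take p.2) ''
        (Set.Icc 0 y.length ×ˢ Set.Icc 0 y.length) := by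
    rintro x ⟨u, v, rfl⟩
    refine ⟨(u.length, x.length), ⟨⟨Nat.zero_le _, by simp⟩, ⟨Nat.zero_le _, by simp; omega⟩⟩, ?_⟩
    simp only
    rw [show u ++ x ++ v = u ++ (x ++ v) by simp, List.drop_left' rfl, List.take_left' rfl]
  exact Set.Finite.subset (Set.Finite.image _ (Set.Finite.prod (Set.finite_Icc _ _) (Set.finite_Icc _ _))) this

/-- words that are the longest in their right-equivalence class -/
def RMax (y : List α) : Set (List α) :=
  {w | w <:+: y ∧ ∀ a : α, EndPos y (a :: w) ≠ EndPos y w}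

lemma y_mem_RMax (y : List α) : y ∈ RMax y := by
  refine ⟨List.infix_refl y, fun a hcon => ?_⟩
  have hy : y.length ∈ EndPos y y := ⟨le_refl _, le_refl _, by simp⟩
  rw [← hcon] at hy
  have := hy.1
  simp at this

lemma endpos_injOn_RMax (y : List α) : Set.InjOn (EndPos y) (RMax y) := by
  intro w1 hw1 w2 hw2 hE
  by_contra hne
  -- wlog shorter is w1
  wlog hlen : w1.length ≤ w2.length generalizing w1 w2
  · exact this hw2 hw1 hE.symm (Ne.symm hne) (by omega)
  obtain ⟨i, hi⟩ := endpos_nonempty hw1.1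
  have hi2 : i ∈ EndPos y w2 := hE ▸ hi
  have hsuf : w1 <:+ w2 := suffix_comp_of_mem hi hi2 hlen
  have hltlen : w1.length < w2.length := by
    rcases lt_or_eq_of_le hlen with h | h
    · exact h
    · exact absurd (hsuf.eq_of_length h) hne
  obtain ⟨u, hu⟩ := hsuf
  have hune : u ≠ [] := by
    intro h; rw [h] at hu; simp at hu; exact hne hu
  have hcons : (u.getLast hune) :: w1 <:+ w2 := by
    refine ⟨u.dropLast, ?_⟩
    rw [show u.dropLast ++ (u.getLast hune) :: w1 = (u.dropLast ++ [u.getLast hune]) ++ w1 by simp,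
      List.dropLast_append_getLast hune, hu]
  apply hw1.2 (u.getLast hune)
  apply Set.Subset.antisymm
  · exact endpos_anti (List.suffix_cons _ _)
  · intro j hj
    have hj2 : j ∈ EndPos y w2 := hE ▸ hj
    exact ⟨le_trans (by simp [Nat.succ_le_iff]; omega) hj2.1, hj2.2.1, hcons.trans hj2.2.2⟩

open Classical in
/-- canonical longest word in the right-equivalence class `E` -/
noncomputable def wmax (y : List α) (E : Set ℕ) : List α :=
  if h : ∃ w, (w <:+: y ∧ EndPos y w = E) ∧
      ∀ v, (v <:+: y ∧ EndPos y v = E) → v.length ≤ w.length then h.choose else []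

lemma wmax_spec {y x : List α} (hx : x <:+: y) :
    wmax y (EndPos y x) <:+: y ∧ EndPos y (wmax y (EndPos y x)) = EndPos y x ∧
      wmax y (EndPos y x) ∈ RMax y := by
  classical
  have hex : ∃ w, (w <:+: y ∧ EndPos y w = EndPos y x) ∧
      ∀ v, (v <:+: y ∧ EndPos y v = EndPos y x) → v.length ≤ w.length := by
    have hfin : {w | w <:+: y ∧ EndPos y w = EndPos y x}.Finite :=
      (finite_infix y).subset (fun w hw => hw.1)
    have hne : {w | w <:+: y ∧ EndPos y w = EndPos y x}.Nonempty := ⟨x, hx, rfl⟩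
    obtain ⟨a, ha, hamax⟩ := Set.Finite.exists_maximalFor List.length _ hfin hne
    refine ⟨a, ha, fun v hv => ?_⟩
    by_contra hcon
    have := hamax hv (by omega)
    omega
  rw [wmax, dif_pos hex]
  obtain ⟨⟨h1, h2⟩, h3⟩ := hex.choose_spec
  refine ⟨h1, h2, h1, fun a hcon => ?_⟩
  -- a :: (choose) would be a longer member of the class
  have hinf : (a :: hex.choose) <:+: y := by
    obtain ⟨i, hi⟩ := endpos_nonempty hx
    have : i ∈ EndPos y (a :: hex.choose) := by rw [hcon, h2]; exact hi
    exact infix_of_mem_endpos this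
  have := h3 (a :: hex.choose) ⟨hinf, hcon.trans h2⟩
  simp at this

/-- bound on the size of a laminar family of nonempty subsets of `U` -/
lemma laminar_bound (N : ℕ) : ∀ (U : Finset ℕ) (F : Finset (Finset ℕ)), U.card ≤ N →
    (∀ E ∈ F, E.Nonempty) → (∀ E ∈ F, E ⊆ U) →
    (∀ E1 ∈ F, ∀ E2 ∈ F, E1 ⊆ E2 ∨ E2 ⊆ E1 ∨ Disjoint E1 E2) →
    F.Nonempty →
    F.card + 2 ≤ 2 * U.card + (if U ∈ F then 1 else 0) := by
  induction N using Nat.strong_induction_on with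
  | _ N ih =>
    intro U F hUN hne hsub hlam hFne
    classical
    by_cases hFU : F ⊆ {U}
    · have hF : F = {U} := by
        rcases Finset.subset_singleton_iff.mp hFU with h | h
        · exact absurd h (Finset.nonempty_iff_ne_empty.mp hFne)
        · exact h
      have hUF : U ∈ F := by rw [hF]; exact Finset.mem_singleton_self U
      have hUpos : 0 < U.card := Finset.card_pos.mpr (hne U hUF)
      simp [hF, hUF]
      exact Finset.card_pos.mp hUpos
    · -- there is an element different from U
      have hF' : (F.erase U).Nonempty := by
        rw [Finset.not_subset] at hFU
        obtain ⟨E0, hE0, hE0U⟩ := hFU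
        exact ⟨E0, Finset.mem_erase.mpr ⟨by simpa using hE0U, hE0⟩⟩
      obtain ⟨E, hEmem, hEmax⟩ := Finset.exists_maximal hF'
      have hEF : E ∈ F := Finset.mem_of_mem_erase hEmem
      have hEneU : E ≠ U := Finset.ne_of_mem_erase hEmem
      have hEssub : E ⊂ U := (Finset.ssubset_iff_subset_ne).mpr ⟨hsub E hEF, hEneU⟩
      have hEcard : E.card < U.card := Finset.card_lt_card hEssub
      have hEpos : 0 < E.card := Finset.card_pos.mpr (hne E hEF)
      set FE := (F.erase U).filter (· ⊆ E) with hFE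
      set FD := (F.erase U).filter (fun A => ¬ A ⊆ E) with hFD
      have hsplit : FE.card + FD.card = (F.erase U).card :=
        Finset.card_filter_add_card_filter_not _
      have hFcard : F.card ≤ (F.erase U).card + (if U ∈ F then 1 else 0) := by
        by_cases hUF : U ∈ F
        · simp [hUF, Finset.card_erase_of_mem hUF]
          omega
        · simp [hUF, Finset.erase_eq_of_notMem hUF]
      -- FD sets are inside U \ E
      have hFDsub : ∀ A ∈ FD, A ⊆ U \ E := by
        intro A hA
        rw [hFD, Finset.mem_filter] at hA
        obtain ⟨hA1, hA2⟩ := hA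
        have hAF : A ∈ F := Finset.mem_of_mem_erase hA1
        have hdisj : Disjoint A E := by
          rcases hlam A hAF E hEF with h | h | h
          · exact absurd h hA2
          · rcases eq_or_ne E A with rfl | hne2
            · exact absurd Finset.Subset.rfl hA2
            · exact absurd (hEmax hA1 h) (fun h' => hne2 (Finset.Subset.antisymm h h'))
          · exact h
        intro i hi
        exact Finset.mem_sdiff.mpr ⟨hsub A hAF hi, fun hiE => (Finset.disjoint_left.mp hdisj hi) hiE⟩
      -- apply IH to FE over E
      have hFEne : FE.Nonempty := ⟨E, by rw [hFE, Finset.mem_filter]; exact ⟨hEmem, le_refl _⟩⟩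
      have hIH1 : FE.card + 2 ≤ 2 * E.card + 1 := by
        have := ih E.card (by omega) E FE (le_refl _)
          (fun A hA => hne A (Finset.mem_of_mem_erase (Finset.mem_filter.mp hA).1))
          (fun A hA => (Finset.mem_filter.mp hA).2)
          (fun A hA B hB => hlam A (Finset.mem_of_mem_erase (Finset.mem_filter.mp hA).1)
            B (Finset.mem_of_mem_erase (Finset.mem_filter.mp hB).1))
          hFEne
        split_ifs at this with hh
        · omega
        · omega
      -- apply IH to FD over U \ E
      have hUEcard : (U \ E).card = U.card - E.card := Finset.card_sdiff_of_subset hEssub.subset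
      have hUEpos : 0 < (U \ E).card := by omega
      have hIH2 : FD.card + 1 ≤ 2 * (U \ E).card := by
        rcases Finset.eq_empty_or_nonempty FD with hFDe | hFDne
        · simp [hFDe]; omega
        · have := ih (U \ E).card (by omega) (U \ E) FD (le_refl _)
            (fun A hA => hne A (Finset.mem_of_mem_erase (Finset.mem_filter.mp hA).1))
            hFDsub
            (fun A hA B hB => hlam A (Finset.mem_of_mem_erase (Finset.mem_filter.mp hA).1)
              B (Finset.mem_of_mem_erase (Finset.mem_filter.mp hB).1))
            hFDne
          split_ifs at this with hh
          · omega
          · omega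
      omega

end DawgAux

open DawgAux

theorem dawg_edge_bound {α : Type*} (y : List α) (h : 2 < y.length) :
    {p : Set ℕ × α | ∃ (x : List α) (b : α),
        p = (EndPos y x, b) ∧ x <:+: y ∧ (x ++ [b]) <:+: y}.ncard
      ≤ 3 * y.length - 4 := by
  classical
  set n := y.length with hn
  set S : Set (Set ℕ × α) := {p : Set ℕ × α | ∃ (x : List α) (b : α),
      p = (EndPos y x, b) ∧ x <:+: y ∧ (x ++ [b]) <:+: y} with hS
  set T : Set (List α) := {x | x <:+: y} with hT
  have hTfin : T.Finite := finite_infix y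
  set Z : Set (List α) := {w | w <:+: y ∧ ∀ b : α, ¬ (w ++ [b]) <:+: y} with hZ
  have hZT : Z ⊆ T := fun w hw => hw.1
  have hZfin : Z.Finite := hTfin.subset hZT
  set Q : Set (List α × α) := {p | p.1 <:+: y ∧ (p.1 ++ [p.2]) <:+: y} with hQ
  set c : List α → Option α :=
    fun w => if h : ∃ b : α, (w ++ [b]) <:+: y then some h.choose else none with hc
  set Qcan : Set (List α × α) := Q ∩ {p | c p.1 = some p.2} with hQcan
  set P : Set (List α × α) := {p | p.1 ∈ RMax y ∧ (p.1 ++ [p.2]) <:+: y} with hP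
  set F : Set (Set ℕ) := {E | ∃ x : List α, x ≠ [] ∧ x <:+: y ∧ EndPos y x = E} with hF
  set F1 : Set (Set ℕ) := {E ∈ F | n ∈ E} with hF1
  set F2 : Set (Set ℕ) := {E ∈ F | n ∉ E} with hF2
  set Suf : Set (List α) := {s | s ≠ [] ∧ s <:+ y} with hSuf
  -- Q is finite and |Q| + 1 = |T|
  have happQ : ∀ p ∈ Q, p.1 ++ [p.2] ∈ T ∧ p.1 ++ [p.2] ≠ [] := by
    rintro p ⟨hp1, hp2⟩
    exact ⟨hp2, by simp⟩
  have hQinj : Set.InjOn (fun p : List α × α => p.1 ++ [p.2]) Q := by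
    rintro p hp q hq he
    simp only at he
    have := List.append_inj' he (by simp)
    have h2 : p.2 = q.2 := by simpa using this.2
    exact Prod.ext this.1 h2
  have hQimg : (fun p : List α × α => p.1 ++ [p.2]) '' Q = T \ {[]} := by
    apply Set.Subset.antisymm
    · rintro _ ⟨p, hp, rfl⟩
      exact ⟨(happQ p hp).1, (happQ p hp).2⟩
    · rintro x ⟨hx, hxne⟩
      have hxne' : x ≠ [] := hxne
      refine ⟨(x.dropLast, x.getLast hxne'), ⟨?_, ?_⟩, List.dropLast_append_getLast hxne'⟩
      · exact ((List.dropLast_prefix x).isInfix).trans hx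
      · rw [List.dropLast_append_getLast hxne']; exact hx
  have hQfin : Q.Finite :=
    Set.Finite.of_finite_image (hTfin.subset (by rw [hQimg]; exact Set.diff_subset)) hQinj
  have hTpos : 1 ≤ T.ncard := (Set.ncard_pos hTfin).mpr ⟨[], List.nil_infix⟩
  have hQcount : Q.ncard + 1 = T.ncard := by
    have h1 : (T \ {([] : List α)}).ncard = T.ncard - 1 :=
      Set.ncard_diff_singleton_of_mem (List.nil_infix)
    have h2 : Q.ncard = (T \ {([] : List α)}).ncard := by
      rw [← hQimg, Set.ncard_image_of_injOn hQinj]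
    omega
  -- Qcan counting : |Qcan| + |Z| = |T|
  have hQcanQ : Qcan ⊆ Q := Set.inter_subset_left
  have hQcanfin : Qcan.Finite := hQfin.subset hQcanQ
  have hQcaninj : Set.InjOn Prod.fst Qcan := by
    rintro p ⟨hp, hp2⟩ q ⟨hq, hq2⟩ he
    simp only [Set.mem_setOf_eq] at hp2 hq2
    refine Prod.ext he ?_
    have : some p.2 = some q.2 := by rw [← hp2, ← hq2, he]
    simpa using this
  have hQcanimg : Prod.fst '' Qcan = T \ Z := by
    apply Set.Subset.antisymm
    · rintro _ ⟨p, ⟨⟨hp1, hp2⟩, _⟩, rfl⟩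
      exact ⟨hp1, fun hzz => hzz.2 p.2 hp2⟩
    · rintro w ⟨hw, hwz⟩
      have hex : ∃ b : α, (w ++ [b]) <:+: y := by
        by_contra hcon
        push_neg at hcon
        exact hwz ⟨hw, hcon⟩
      refine ⟨(w, hex.choose), ⟨⟨hw, hex.choose_spec⟩, ?_⟩, rfl⟩
      simp only [Set.mem_setOf_eq, hc]
      rw [dif_pos hex]
  have hZcount : Qcan.ncard + Z.ncard = T.ncard := by
    have h1 : (T \ Z).ncard = T.ncard - Z.ncard := Set.ncard_diff hZT hZfin
    have h2 : Qcan.ncard = (T \ Z).ncard := by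
      rw [← hQcanimg, Set.ncard_image_of_injOn hQcaninj]
    have h3 : Z.ncard ≤ T.ncard := Set.ncard_le_ncard hZT hTfin
    omega
  have hyZ : y ∈ Z := by
    refine ⟨List.infix_refl y, fun b hb => ?_⟩
    have := hb.length_le
    simp at this
  have hZpos : 1 ≤ Z.ncard := (Set.ncard_pos hZfin).mpr ⟨y, hyZ⟩
  -- P and its split
  have hPQ : P ⊆ Q := fun p hp => ⟨hp.1.1, hp.2⟩
  have hPfin : P.Finite := hQfin.subset hPQ
  have hRT : RMax y ⊆ T := fun w hw => hw.1
  have hRfin : (RMax y).Finite := hTfin.subset hRT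
  have hyR : y ∈ RMax y := y_mem_RMax y
  have hRpos : 1 ≤ (RMax y).ncard := (Set.ncard_pos hRfin).mpr ⟨y, hyR⟩
  have hRdiff : (RMax y \ {y}).ncard = (RMax y).ncard - 1 :=
    Set.ncard_diff_singleton_of_mem hyR
  have hPcan : (P ∩ Qcan).ncard + 1 ≤ (RMax y).ncard := by
    have hmap : ∀ p ∈ P ∩ Qcan, p.1 ∈ RMax y \ {y} := by
      rintro p ⟨hpP, hpQ⟩
      refine ⟨hpP.1, ?_⟩
      intro hpy
      simp only [Set.mem_singleton_iff] at hpy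
      have := hpP.2.length_le
      rw [hpy] at this
      simp at this
    have hinj : Set.InjOn Prod.fst (P ∩ Qcan) := hQcaninj.mono Set.inter_subset_right
    have := Set.ncard_le_ncard_of_injOn Prod.fst hmap hinj (hRfin.subset Set.diff_subset)
    omega
  have hPnon : (P \ Qcan).ncard + Qcan.ncard ≤ Q.ncard := by
    have hsub : P \ Qcan ⊆ Q \ Qcan := Set.diff_subset_diff_left hPQ
    have h1 : (P \ Qcan).ncard ≤ (Q \ Qcan).ncard :=
      Set.ncard_le_ncard hsub (hQfin.subset Set.diff_subset)
    have h2 : (Q \ Qcan).ncard = Q.ncard - Qcan.ncard := Set.ncard_diff hQcanQ hQcanfin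
    have h3 : Qcan.ncard ≤ Q.ncard := Set.ncard_le_ncard hQcanQ hQfin
    omega
  have hPsplit : P.ncard ≤ (P ∩ Qcan).ncard + (P \ Qcan).ncard := by
    conv_lhs => rw [← Set.inter_union_diff P Qcan]
    exact Set.ncard_union_le _ _
  -- S injects into P
  have hScount : S.ncard ≤ P.ncard := by
    refine Set.ncard_le_ncard_of_injOn (fun p => (wmax y p.1, p.2)) ?_ ?_ hPfin
    · rintro p ⟨x, b, rfl, hx, hxb⟩
      obtain ⟨hw1, hw2, hw3⟩ := wmax_spec hx
      exact ⟨hw3, infix_append_of_endpos_eq hw2.symm hxb⟩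
    · rintro p ⟨x, b, rfl, hx, hxb⟩ q ⟨x', b', rfl, hx', hxb'⟩ he
      simp only [Prod.mk.injEq] at he ⊢
      refine ⟨?_, he.2⟩
      rw [← (wmax_spec hx).2.1, ← (wmax_spec hx').2.1, he.1]
  -- RMax injects into F ∪ {EndPos y []}
  have hFfin : F.Finite := by
    apply ((Set.finite_Icc 1 n).finite_subsets).subset
    rintro E ⟨x, hxne, hxinf, rfl⟩
    intro i hi
    have h1 : 1 ≤ x.length := List.length_pos_iff.mpr hxne
    exact ⟨by have := hi.1; omega, hi.2.1⟩
  have hRF : (RMax y).ncard ≤ F.ncard + 1 := by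
    have himg : EndPos y '' RMax y ⊆ F ∪ {EndPos y []} := by
      rintro _ ⟨w, hw, rfl⟩
      rcases eq_or_ne w [] with rfl | hne
      · exact Or.inr rfl
      · exact Or.inl ⟨w, hne, hw.1, rfl⟩
    have h1 : (RMax y).ncard = (EndPos y '' RMax y).ncard :=
      (Set.ncard_image_of_injOn (endpos_injOn_RMax y)).symm
    have h2 : (EndPos y '' RMax y).ncard ≤ (F ∪ {EndPos y []}).ncard :=
      Set.ncard_le_ncard himg (hFfin.union (Set.finite_singleton _))
    have h3 : (F ∪ {EndPos y []}).ncard ≤ F.ncard + 1 := by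
      have := Set.ncard_union_le F ({EndPos y []} : Set (Set ℕ))
      simpa using this
    omega
  -- suffix counting
  have hSufim : Suf = (fun ℓ => y.drop (n - ℓ)) '' Set.Icc 1 n := by
    apply Set.Subset.antisymm
    · rintro s ⟨hs1, hs2⟩
      refine ⟨s.length, ⟨List.length_pos_iff.mpr hs1, hs2.length_le⟩, ?_⟩
      exact (suffix_eq_drop hs2).symm
    · rintro _ ⟨ℓ, ⟨hl1, hl2⟩, rfl⟩
      constructor
      · have hlen : (y.drop (n - ℓ)).length = ℓ := by rw [List.length_drop]; omega
        intro hcon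
        simp only at hcon
        rw [hcon] at hlen
        simp at hlen
        omega
      · exact List.drop_suffix _ _
  have hSufinj : Set.InjOn (fun ℓ => y.drop (n - ℓ)) (Set.Icc 1 n) := by
    rintro a ⟨ha1, ha2⟩ b ⟨hb1, hb2⟩ he
    have := congrArg List.length he
    simp only [List.length_drop] at this
    omega
  have hSuffin : Suf.Finite := by
    rw [hSufim]; exact (Set.finite_Icc 1 n).image _
  have hSufcount : Suf.ncard = n := by
    rw [hSufim, Set.ncard_image_of_injOn hSufinj, ← Finset.coe_Icc, Set.ncard_coe_finset,
      Nat.card_Icc]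
    omega
  -- all of Z has EndPos = {n}
  have hZmax : ∀ w ∈ Z, ∀ i ∈ EndPos y w, i = n := by
    rintro w ⟨hw1, hw2⟩ i hi
    by_contra hcon
    have hilt : i < n := lt_of_le_of_ne hi.2.1 hcon
    apply hw2 (y[i]'hilt)
    apply infix_of_suffix_take (i := i + 1)
    rw [take_succ_getElem y hilt]
    obtain ⟨t, ht⟩ := hi.2.2
    exact ⟨t, by rw [← List.append_assoc, ht]⟩
  have hZend : ∀ w ∈ Z, EndPos y w = {n} := by
    intro w hw
    apply Set.Subset.antisymm
    · intro i hi
      exact hZmax w hw i hi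
    · rintro i rfl
      obtain ⟨j, hj⟩ := endpos_nonempty hw.1
      have := hZmax w hw j hj
      subst this
      exact hj
  have hZSuf : Z ⊆ Suf := by
    intro w hw
    constructor
    · rintro rfl
      apply hw.2 (y[0]'(by omega))
      apply infix_of_suffix_take (i := 1)
      rw [show (1 : ℕ) = 0 + 1 by rfl, take_succ_getElem y (by omega)]
      simp
    · have hn' : n ∈ EndPos y w := by rw [hZend w hw]; rfl
      have := hn'.2.2
      rwa [hn, List.take_length] at this
  have hZlen : Z.ncard ≤ n := by
    rw [← hSufcount]; exact Set.ncard_le_ncard hZSuf hSuffin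
  -- F1 bound
  have hyEnd : EndPos y y = {n} := hZend y hyZ
  have hF1 : F1.ncard + Z.ncard ≤ n + 1 := by
    have hsub : F1 ⊆ (EndPos y '' (Suf \ Z)) ∪ {({n} : Set ℕ)} := by
      rintro E ⟨⟨x, hxne, hxinf, rfl⟩, hnE⟩
      have hxSuf : x ∈ Suf := by
        refine ⟨hxne, ?_⟩
        have := hnE.2.2
        rwa [hn, List.take_length] at this
      by_cases hxZ : x ∈ Z
      · right
        rw [hZend x hxZ]
        rfl
      · exact Or.inl ⟨x, ⟨hxSuf, hxZ⟩, rfl⟩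
    have h0 : (Suf \ Z).ncard = n - Z.ncard := by
      rw [Set.ncard_diff hZSuf hZfin, hSufcount]
    have h1 : F1.ncard ≤ (EndPos y '' (Suf \ Z)).ncard + 1 := by
      have := Set.ncard_le_ncard hsub
        (((hSuffin.subset Set.diff_subset).image _).union (Set.finite_singleton _))
      have h2 := Set.ncard_union_le (EndPos y '' (Suf \ Z)) ({({n} : Set ℕ)})
      simp only [Set.ncard_singleton] at h2
      omega
    have h2 : (EndPos y '' (Suf \ Z)).ncard ≤ n - Z.ncard := by
      rw [← h0]
      exact Set.ncard_image_le (hSuffin.subset Set.diff_subset)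
    omega
  have hFsplit : F.ncard ≤ F1.ncard + F2.ncard := by
    have : F = F1 ∪ F2 := by
      apply Set.Subset.antisymm
      · intro E hE
        by_cases hnE : n ∈ E
        · exact Or.inl ⟨hE, hnE⟩
        · exact Or.inr ⟨hE, hnE⟩
      · rintro E (hE | hE) <;> exact hE.1
    rw [this]
    exact Set.ncard_union_le _ _
  have hF2fin : F2.Finite := hFfin.subset (fun E hE => hE.1)
  -- laminarity of F
  have hlamF : ∀ E1 ∈ F, ∀ E2 ∈ F, E1 ⊆ E2 ∨ E2 ⊆ E1 ∨ Disjoint E1 E2 := by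
    rintro E1 ⟨x1, hx1ne, hx1, rfl⟩ E2 ⟨x2, hx2ne, hx2, rfl⟩
    by_cases hdis : Disjoint (EndPos y x1) (EndPos y x2)
    · exact Or.inr (Or.inr hdis)
    · obtain ⟨i, hi1, hi2⟩ := Set.not_disjoint_iff.mp hdis
      rcases le_total x1.length x2.length with hl | hl
      · exact Or.inr (Or.inl (endpos_anti (suffix_comp_of_mem hi1 hi2 hl)))
      · exact Or.inl (endpos_anti (suffix_comp_of_mem hi2 hi1 hl))
  have hF2icc : ∀ E ∈ F2, E ⊆ Set.Icc 1 (n-1) := by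
    rintro E ⟨⟨x, hxne, hxinf, rfl⟩, hnE⟩ i hi
    have h1 : 1 ≤ x.length := List.length_pos_iff.mpr hxne
    have h2 := hi.1
    have h3 := hi.2.1
    have h4 : i ≠ n := fun hcon => hnE (hcon ▸ hi)
    rw [Set.mem_Icc]
    omega
  by_cases hcase : (Set.Icc 1 (n-1) : Set ℕ) ∈ F2
  · -- y = replicate (n-1) b ++ [last], so F2 is small
    obtain ⟨⟨x0, hx0ne, hx0inf, hx0E⟩, -⟩ := hcase
    have h1mem : (1 : ℕ) ∈ EndPos y x0 := by
      rw [hx0E]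
      exact Set.mem_Icc.mpr ⟨le_refl 1, by omega⟩
    have hx0len : x0.length = 1 := le_antisymm h1mem.1 (List.length_pos_iff.mpr hx0ne)
    obtain ⟨b, hb⟩ : ∃ b : α, x0 = [b] := by
      cases x0 with
      | nil => simp at hx0len
      | cons hd tl =>
        cases tl with
        | nil => exact ⟨hd, rfl⟩
        | cons h2 t2 => simp at hx0len
    subst hb
    have htake : ∀ i, i ≤ n - 1 → y.take i = List.replicate i b := by
      intro i
      induction i with
      | zero => intro _; simp
      | succ k ihk =>
        intro hk
        have hklt : k < n := by omega
        have hkmem : (k+1 : ℕ) ∈ EndPos y [b] := by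
          have : (k+1 : ℕ) ∈ (Set.Icc 1 (n-1) : Set ℕ) := Set.mem_Icc.mpr ⟨by omega, by omega⟩
          rwa [← hx0E] at this
        have hsuf := hkmem.2.2
        rw [take_succ_getElem y hklt] at hsuf ⊢
        have h0 : ([] : List α) ++ [b] <:+ y.take k ++ [y[k]'hklt] := by simpa using hsuf
        have hbeq := (suffix_append_singleton h0).1
        rw [ihk (by omega), ← hbeq, ← List.replicate_succ']
    have hF2b : F2.ncard ≤ n - 1 := by
      have hsub : F2 ⊆ (fun k => EndPos y (List.replicate k b)) '' Set.Icc 1 (n-1) := by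
        rintro E ⟨⟨x, hxne, hxinf, rfl⟩, hnE⟩
        obtain ⟨i, hi⟩ := endpos_nonempty hxinf
        have hieq : i ≠ n := fun hcon => hnE (hcon ▸ hi)
        have hile : i ≤ n - 1 := by have := hi.2.1; omega
        have hxrep : x = List.replicate x.length b := by
          rw [List.eq_replicate_length]
          intro cc hcc
          apply List.eq_of_mem_replicate (n := i)
          rw [← htake i hile]
          exact hi.2.2.subset hcc
        refine ⟨x.length, Set.mem_Icc.mpr ⟨List.length_pos_iff.mpr hxne, by have := hi.1; omega⟩, ?_⟩
        simp only
        rw [← hxrep]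
      have h1 := Set.ncard_le_ncard hsub ((Set.finite_Icc 1 (n-1)).image _)
      have h2 : ((fun k => EndPos y (List.replicate k b)) '' Set.Icc 1 (n-1)).ncard
          ≤ (Set.Icc 1 (n-1) : Set ℕ).ncard := Set.ncard_image_le (Set.finite_Icc _ _)
      have h3 : (Set.Icc 1 (n-1) : Set ℕ).ncard = n - 1 := by
        rw [← Finset.coe_Icc, Set.ncard_coe_finset, Nat.card_Icc]
        omega
      omega
    omega
  · -- laminar bound on F2
    rcases Set.eq_empty_or_nonempty F2 with hF2e | hF2ne
    · have hF2z : F2.ncard = 0 := by rw [hF2e]; simp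
      omega
    · set U : Finset ℕ := Finset.Icc 1 (n-1) with hU
      set toF : Set ℕ → Finset ℕ := fun E => U.filter (· ∈ E) with htoF
      have hcoe : ∀ E ∈ F2, ↑(toF E) = E := by
        intro E hE
        ext i
        simp only [htoF, Finset.coe_filter, Set.mem_setOf_eq, Finset.mem_Icc, hU, Finset.mem_Icc]
        constructor
        · rintro ⟨-, h2⟩; exact h2
        · intro hiE
          have := hF2icc E hE hiE
          rw [Set.mem_Icc] at this
          exact ⟨this, hiE⟩
      have hGinj : Set.InjOn toF F2 := by
        intro E1 h1 E2 h2 he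
        rw [← hcoe E1 h1, ← hcoe E2 h2, he]
      have hGfin : (toF '' F2).Finite := hF2fin.image _
      have hUmem : U ∉ hGfin.toFinset := by
        intro hmem
        rw [Set.Finite.mem_toFinset] at hmem
        obtain ⟨E, hE, hEU⟩ := hmem
        have hEeq : E = (Set.Icc 1 (n-1) : Set ℕ) := by
          rw [← hcoe E hE, hEU, hU, Finset.coe_Icc]
        rw [hEeq] at hE
        exact hcase hE
      have hbound := laminar_bound U.card U hGfin.toFinset le_rfl
        (by
          intro A hA
          rw [Set.Finite.mem_toFinset] at hA
          obtain ⟨E, hE, rfl⟩ := hA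
          obtain ⟨x, hxne, hxinf, hxE⟩ := hE.1
          obtain ⟨i, hi⟩ := endpos_nonempty hxinf
          rw [← Finset.coe_nonempty, hcoe E hE]
          exact ⟨i, hxE ▸ hi⟩)
        (by
          intro A hA
          rw [Set.Finite.mem_toFinset] at hA
          obtain ⟨E, hE, rfl⟩ := hA
          exact Finset.filter_subset _ _)
        (by
          intro A1 hA1 A2 hA2
          rw [Set.Finite.mem_toFinset] at hA1 hA2
          obtain ⟨E1, hE1, rfl⟩ := hA1
          obtain ⟨E2, hE2, rfl⟩ := hA2
          rcases hlamF E1 hE1.1 E2 hE2.1 with hh | hh | hh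
          · left; rw [← Finset.coe_subset, hcoe E1 hE1, hcoe E2 hE2]; exact hh
          · right; left; rw [← Finset.coe_subset, hcoe E1 hE1, hcoe E2 hE2]; exact hh
          · right; right; rw [← Finset.disjoint_coe, hcoe E1 hE1, hcoe E2 hE2]; exact hh)
        (by
          obtain ⟨E, hE⟩ := hF2ne
          exact ⟨toF E, (Set.Finite.mem_toFinset _).mpr ⟨E, hE, rfl⟩⟩)
      rw [if_neg hUmem] at hbound
      have hUcard : U.card = n - 1 := by rw [hU, Nat.card_Icc]; omega
      have hF2card : F2.ncard = hGfin.toFinset.card := by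
        rw [← Set.ncard_eq_toFinset_card (toF '' F2) hGfin, Set.ncard_image_of_injOn hGinj]
      omega
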